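/- Let G = (V, E, w) be a finite weighted directed graph with integer weights where every vertex has out-degree at least one (one-player energy game for Max), and let B = {v ∈ V : there is an infinite path from v with all prefix sums ≥ 0 (initial energy 0 suffices)}. Then for every v ∈ V \ B from which B is reachable, the minimal sufficient initial energy at v equals the absolute value of the maximal weight over all paths from v to B; and if B is not reachable from v, then no finite initial energy suffices at v. -/

import Mathlib

/-- Initial energy `x` suffices at `v` in the one-player energy game. -/
def Suffices' {V : Type*} (E : V → V → Prop) (w : V → V → ℤ)
    (v : V) (x : ℕ) : Prop :=
  ∃ p : ℕ → V, p 0 = v ∧ (∀ i, E (p i) (p (i + 1))) ∧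
    ∀ n : ℕ, 0 ≤ (x : ℤ) + ∑ i ∈ Finset.range n, w (p i) (p (i + 1))

/-- A path from `v` to `B`: last vertex and only the last vertex lies in `B`. -/
def IsPathTo {V : Type*} (E : V → V → Prop) (B : Set V) (v : V)
    (k : ℕ) (q : ℕ → V) : Prop :=
  q 0 = v ∧ (∀ i < k, E (q i) (q (i + 1))) ∧ (∀ i < k, q i ∉ B) ∧ q k ∈ B

namespace Stmt16Aux

variable {V : Type*} (w : V → V → ℤ)

/-- Prefix weight of a path. -/
def pSum (q : ℕ → V) (n : ℕ) : ℤ :=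
  ∑ i ∈ Finset.range n, w (q i) (q (i + 1))

lemma pSum_zero (q : ℕ → V) : pSum w q 0 = 0 := by simp [pSum]

lemma pSum_succ (q : ℕ → V) (n : ℕ) :
    pSum w q (n + 1) = pSum w q n + w (q n) (q (n + 1)) :=
  Finset.sum_range_succ _ _

lemma pSum_shift (q : ℕ → V) (n m : ℕ) :
    pSum w q (n + m) = pSum w q n + pSum w (fun j => q (n + j)) m := by
  simpa [pSum, Nat.add_assoc] using Finset.sum_range_add (fun i => w (q i) (q (i + 1))) n m

variable (E : V → V → Prop)

/-- Splicing a finite path ending in a vertex where energy `0` suffices with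
an infinite witness path from there. -/
lemma splice (v : V) (x : ℕ) (k : ℕ) (q : ℕ → V)
    (hq0 : q 0 = v) (hqe : ∀ i < k, E (q i) (q (i + 1)))
    (hB : Suffices' E w (q k) 0)
    (hsum : ∀ n ≤ k, 0 ≤ (x : ℤ) + pSum w q n) :
    Suffices' E w v x := by
  obtain ⟨p, hp0, hpe, hps⟩ := hB
  set r : ℕ → V := fun n => if n < k then q n else p (n - k) with hr
  have hrq : ∀ n ≤ k, r n = q n := by
    intro n hn
    rcases lt_or_eq_of_le hn with h | h
    · simp [hr, h]
    · subst h; simp [hr, hp0]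
  have hrp : ∀ n, k ≤ n → r n = p (n - k) := by
    intro n hn
    simp [hr, Nat.not_lt.mpr hn]
  have hsums : ∀ n, pSum w r n =
      if n ≤ k then pSum w q n else pSum w q k + pSum w p (n - k) := by
    intro n
    induction n with
    | zero => simp [pSum_zero]
    | succ n ih =>
      rw [pSum_succ, ih]
      by_cases hnk : n + 1 ≤ k
      · have hn : n ≤ k := by omega
        rw [if_pos hnk, if_pos hn, pSum_succ, hrq _ hn, hrq _ hnk]
      · have hkn : k ≤ n := by omega
        rw [if_neg hnk]
        have h2 : r (n + 1) = p (n + 1 - k) := hrp _ (by omega)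
        rcases lt_or_eq_of_le hkn with h | h
        · rw [if_neg (by omega), hrp n hkn, h2]
          have : n + 1 - k = (n - k) + 1 := by omega
          rw [this, pSum_succ]
          have : n - k + 1 = n + 1 - k := by omega
          rw [this]; ring
        · subst h
          rw [if_pos le_rfl, hrq k le_rfl, h2,
            show k + 1 - k = 1 by omega]
          simp [pSum_succ, pSum_zero, hp0]
  refine ⟨r, by rw [hrq 0 (Nat.zero_le _), hq0], ?_, ?_⟩
  · intro i
    by_cases hik : i + 1 ≤ k
    · rw [hrq i (by omega), hrq (i + 1) hik]
      exact hqe i (by omega)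
    · have hk : k ≤ i := by omega
      rw [hrp i hk, hrp (i + 1) (by omega)]
      have : i + 1 - k = (i - k) + 1 := by omega
      rw [this]
      exact hpe (i - k)
  · intro n
    rw [show (∑ i ∈ Finset.range n, w (r i) (r (i + 1))) = pSum w r n from rfl,
      hsums n]
    by_cases hnk : n ≤ k
    · rw [if_pos hnk]; exact hsum n hnk
    · rw [if_neg hnk]
      have h1 : 0 ≤ (x : ℤ) + pSum w q k := hsum k le_rfl
      have h2 : 0 ≤ pSum w p (n - k) := by simpa [pSum] using hps (n - k)
      linarith

/-- If there is a path from `u` to `B` of nonnegative total weight, then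
energy `0` suffices at `u`. -/
lemma mem_B_of_nonneg_path :
    ∀ k : ℕ, ∀ u : V, ∀ q : ℕ → V,
      IsPathTo E {u : V | Suffices' E w u 0} u k q →
      0 ≤ pSum w q k → Suffices' E w u 0 := by
  intro k
  induction k using Nat.strong_induction_on with
  | _ k ih =>
    rintro u q ⟨hq0, hqe, hqi, hqk⟩ hs
    by_cases hall : ∀ n ≤ k, 0 ≤ pSum w q n
    · exact splice w E u 0 k q hq0 hqe hqk (by simpa using hall)
    · push_neg at hall
      obtain ⟨n, hnk, hneg⟩ := hall
      have hn0 : n ≠ 0 := by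
        rintro rfl; rw [pSum_zero] at hneg; omega
      have hnk' : n < k := by
        rcases lt_or_eq_of_le hnk with h | h
        · exact h
        · subst h; omega
      have hsuffix : IsPathTo E {u : V | Suffices' E w u 0} (q n) (k - n)
          (fun j => q (n + j)) := by
        refine ⟨by simp, fun i hi => ?_, fun i hi => ?_, ?_⟩
        · simpa [Nat.add_assoc] using hqe (n + i) (by omega)
        · exact hqi (n + i) (by omega)
        · simpa [show n + (k - n) = k by omega] using hqk
      have hsum' : 0 ≤ pSum w (fun j => q (n + j)) (k - n) := by
        have h := pSum_shift w q n (k - n)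
        rw [show n + (k - n) = k by omega] at h
        omega
      exact absurd (ih (k - n) (by omega) (q n) _ hsuffix hsum')
        (hqi n hnk')

/-- If some finite energy suffices at `v`, there is a path from `v` to `B`
whose weight is at least `-x`. -/
lemma reach (v : V) (x : ℕ) (h : Suffices' E w v x) :
    ∃ (k : ℕ) (q : ℕ → V), IsPathTo E {u : V | Suffices' E w u 0} v k q ∧
      0 ≤ (x : ℤ) + pSum w q k := by
  classical
  obtain ⟨p, hp0, hpe, hps⟩ := h
  have hps' : ∀ n, 0 ≤ (x : ℤ) + pSum w p n := hps
  obtain ⟨m0, ⟨m, hm⟩, hmin⟩ := Int.exists_least_of_bdd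
    (P := fun z => ∃ n, pSum w p n = z)
    ⟨-(x : ℤ), by rintro z ⟨n, rfl⟩; have := hps' n; omega⟩
    ⟨pSum w p 0, 0, rfl⟩
  -- p m ∈ B
  have hmB : Suffices' E w (p m) 0 := by
    refine ⟨fun j => p (m + j), rfl, fun i => by
      simpa [Nat.add_assoc] using hpe (m + i), fun n => ?_⟩
    have h1 := pSum_shift w p m n
    have h2 := hmin (pSum w p (m + n)) ⟨m + n, rfl⟩
    rw [hm] at h1
    have h3 : (∑ i ∈ Finset.range n, w ((fun j => p (m + j)) i)
        ((fun j => p (m + j)) (i + 1))) = pSum w (fun j => p (m + j)) n := rfl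
    rw [h3]
    simp only [Nat.cast_zero, zero_add]
    omega
  have hex : ∃ n, Suffices' E w (p n) 0 := ⟨m, hmB⟩
  let j := Nat.find hex
  refine ⟨j, p, ⟨hp0, fun i _ => hpe i, fun i hi => Nat.find_min hex hi,
    Nat.find_spec hex⟩, hps' j⟩

end Stmt16Aux

/-- let `B` be the set of vertices where initial energy `0`
suffices. For `v ∉ B`: if `B` is reachable from `v`, the minimal sufficient
initial energy at `v` equals the absolute value of the maximal weight of a
path from `v` to `B`; if `B` is unreachable from `v`, no finite initial
energy suffices. -/
theorem stmt_16 {V : Type*} [Fintype V] (E : V → V → Prop) (w : V → V → ℤ)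
    (hE : ∀ v : V, ∃ u, E v u) :
    ∀ v ∉ {u : V | Suffices' E w u 0},
      ((∃ (k : ℕ) (q : ℕ → V), IsPathTo E {u : V | Suffices' E w u 0} v k q) →
        sInf {x : ℕ∞ | ∃ n : ℕ, x = (n : ℕ∞) ∧ Suffices' E w v n} =
          (((sSup {s : ℤ | ∃ (k : ℕ) (q : ℕ → V),
              IsPathTo E {u : V | Suffices' E w u 0} v k q ∧
              s = ∑ i ∈ Finset.range k, w (q i) (q (i + 1))}).natAbs : ℕ) : ℕ∞)) ∧
      ((¬ ∃ (k : ℕ) (q : ℕ → V),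
          IsPathTo E {u : V | Suffices' E w u 0} v k q) →
        ∀ n : ℕ, ¬ Suffices' E w v n) := by
  classical
  intro v hv
  set B : Set V := {u : V | Suffices' E w u 0} with hB
  constructor
  · -- reachable case
    intro hpath
    set S : Set ℤ := {s : ℤ | ∃ (k : ℕ) (q : ℕ → V),
        IsPathTo E B v k q ∧
        s = ∑ i ∈ Finset.range k, w (q i) (q (i + 1))} with hS
    have hSne : S.Nonempty := by
      obtain ⟨k, q, hq⟩ := hpath
      exact ⟨_, k, q, hq, rfl⟩
    -- every element of S is negative
    have hSneg : ∀ s ∈ S, s ≤ -1 := by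
      rintro s ⟨k, q, hq, rfl⟩
      by_contra hpos
      push_neg at hpos
      have : Suffices' E w v 0 :=
        Stmt16Aux.mem_B_of_nonneg_path w E k v q hq (by
          rw [Stmt16Aux.pSum]; omega)
      exact hv this
    have hbdd : BddAbove S := ⟨-1, fun s hs => hSneg s hs⟩
    -- the supremum is attained
    obtain ⟨s0, hs0S, hs0ub⟩ := Int.exists_greatest_of_bdd
      (P := fun z => z ∈ S) ⟨-1, fun z hz => hSneg z hz⟩ hSne
    have hsup : sSup S = s0 :=
      le_antisymm (csSup_le hSne hs0ub) (le_csSup hbdd hs0S)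
    have hs0neg : s0 ≤ -1 := hSneg s0 hs0S
    set xstar : ℕ := s0.natAbs with hxstar
    have hxcast : (xstar : ℤ) = -s0 := by omega
    -- xstar suffices at v
    have hsuff : Suffices' E w v xstar := by
      obtain ⟨k, q, ⟨hq0, hqe, hqi, hqk⟩, hsum⟩ := hs0S
      refine Stmt16Aux.splice w E v xstar k q hq0 hqe hqk ?_
      intro n hn
      rw [hxcast]
      -- need pSum w q n ≥ s0
      by_contra hlt
      push_neg at hlt
      have hσ : Stmt16Aux.pSum w q n < s0 := by omega
      have hnk : n < k := by
        rcases lt_or_eq_of_le hn with h | h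
        · exact h
        · subst h
          rw [show Stmt16Aux.pSum w q n =
            ∑ i ∈ Finset.range n, w (q i) (q (i + 1)) from rfl] at hσ
          omega
      -- suffix path from q n to B with positive weight
      have hsuffix : IsPathTo E B (q n) (k - n) (fun j => q (n + j)) := by
        refine ⟨by simp, fun i hi => ?_, fun i hi => ?_, ?_⟩
        · simpa [Nat.add_assoc] using hqe (n + i) (by omega)
        · exact hqi (n + i) (by omega)
        · simpa [show n + (k - n) = k by omega] using hqk
      have hsum' : 0 ≤ Stmt16Aux.pSum w (fun j => q (n + j)) (k - n) := by
        have h := Stmt16Aux.pSum_shift w q n (k - n)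
        rw [show n + (k - n) = k by omega] at h
        have hk : Stmt16Aux.pSum w q k = s0 := hsum.symm
        omega
      exact absurd
        (Stmt16Aux.mem_B_of_nonneg_path w E (k - n) (q n) _ hsuffix hsum')
        (hqi n hnk)
    -- every sufficient energy is at least xstar
    have hlb : ∀ n : ℕ, Suffices' E w v n → xstar ≤ n := by
      intro n hn
      obtain ⟨k, q, hq, hqs⟩ := Stmt16Aux.reach w E v n hn
      have : Stmt16Aux.pSum w q k ∈ S := ⟨k, q, hq, rfl⟩
      have h1 := hs0ub _ this
      omega
    rw [hsup]
    refine le_antisymm (sInf_le ⟨xstar, rfl, hsuff⟩) (le_sInf ?_)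
    rintro y ⟨n, rfl, hn⟩
    exact_mod_cast Nat.cast_le.mpr (hlb n hn)
  · -- unreachable case
    intro hnopath n hn
    obtain ⟨k, q, hq, -⟩ := Stmt16Aux.reach w E v n hn
    exact hnopath ⟨k, q, hq⟩
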